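/- For all fixed integers r ≥ 2 and l ≥ 2 there exists n₀ ∈ ℕ such that for every n ≥ n₀ the following holds: every family E of r-element subsets of an n-element vertex set with |E| ≥ n^{r − 1/l^{r−1}} contains a complete r-partite r-uniform subhypergraph K^{(r)}(l,…,l); that is, there exist pairwise disjoint l-element sets A₁, …, A_r of vertices such that every r-element set containing exactly one vertex from each A_i belongs to E. -/

import Mathlib

open Finset

lemma sum_deg (n r : ℕ) (E : Finset (Finset (Fin n)))
    (hE : ∀ e ∈ E, e.card = r) :
    r * E.card ≤ ∑ f ∈ powersetCard (r-1) (univ : Finset (Fin n)),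
      (univ.filter fun v => insert v f ∈ E).card := by
  have key : (E.sigma fun e => e).card ≤
      ((powersetCard (r-1) (univ : Finset (Fin n))).sigma
        (fun f => univ.filter fun v => insert v f ∈ E)).card := by
    apply Finset.card_le_card_of_injOn (fun p => ⟨p.1.erase p.2, p.2⟩)
    · rintro ⟨e, v⟩ hp
      simp only [Finset.mem_coe, Finset.mem_sigma] at hp ⊢
      obtain ⟨he, hv⟩ := hp
      constructor
      · rw [Finset.mem_powersetCard]
        exact ⟨Finset.subset_univ _, by rw [Finset.card_erase_of_mem hv, hE e he]⟩
      · simp only [Finset.mem_filter, Finset.mem_univ, true_and]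
        rw [Finset.insert_erase hv]; exact he
    · rintro ⟨e, v⟩ hp ⟨e', v'⟩ hp' h
      simp only [Finset.mem_coe, Finset.mem_sigma] at hp hp'
      obtain ⟨h1, h2⟩ := Sigma.mk.inj_iff.1 h
      have hv : v = v' := by simpa using h2
      subst hv
      have he : e = e' := by
        rw [← Finset.insert_erase hp.2, ← Finset.insert_erase hp'.2]
        exact congrArg (insert v) h1
      subst he; rfl
  rw [Finset.card_sigma, Finset.card_sigma] at key
  calc r * E.card = ∑ e ∈ E, e.card := by
        rw [Finset.sum_congr rfl hE, Finset.sum_const, smul_eq_mul, mul_comm]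
      _ ≤ _ := key

lemma sum_tuples (n l : ℕ) (F : Finset (Finset (Fin n))) (E : Finset (Finset (Fin n))) :
    ∑ w : Fin l → Fin n, (F.filter fun f => ∀ i, insert (w i) f ∈ E).card
      = ∑ f ∈ F, ((univ.filter fun v => insert v f ∈ E).card) ^ l := by
  have h1 : ∀ w : Fin l → Fin n, (F.filter fun f => ∀ i, insert (w i) f ∈ E).card
      = ∑ f ∈ F, if (∀ i, insert (w i) f ∈ E) then 1 else 0 := fun w => Finset.card_filter _ _
  simp only [h1]
  rw [Finset.sum_comm]
  refine Finset.sum_congr rfl fun f _ => ?_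
  have h2 : (univ.filter fun w : Fin l → Fin n => ∀ i, insert (w i) f ∈ E)
      = Fintype.piFinset (fun _ : Fin l => univ.filter fun v => insert v f ∈ E) := by
    ext w; simp [Fintype.mem_piFinset]
  calc ∑ w : Fin l → Fin n, (if (∀ i, insert (w i) f ∈ E) then 1 else 0)
      = (univ.filter fun w : Fin l → Fin n => ∀ i, insert (w i) f ∈ E).card := by
        rw [Finset.card_filter]
    _ = _ := by
        rw [h2, Fintype.card_piFinset]
        simp

lemma pow_le_descFactorial_add (n : ℕ) : ∀ l : ℕ, n ^ l ≤ n.descFactorial l + l.choose 2 * n ^ (l-1)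
  | 0 => by simp
  | 1 => by simp
  | (k+2) => by
    have ih := pow_le_descFactorial_add n (k+1)
    have h1 : n ^ (k+2) = n * n ^ (k+1) := by ring
    have h2 : n * n ^ (k+1) ≤ n * (n.descFactorial (k+1) + (k+1).choose 2 * n ^ k) := by
      have := ih
      have hk : (k+1) - 1 = k := rfl
      rw [hk] at this
      exact Nat.mul_le_mul_left n this
    have h3 : n * (n.descFactorial (k+1) + (k+1).choose 2 * n ^ k)
        = n * n.descFactorial (k+1) + (k+1).choose 2 * n ^ (k+1) := by ring
    have h4 : n * n.descFactorial (k+1) ≤ (n - (k+1)) * n.descFactorial (k+1)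
        + (k+1) * n.descFactorial (k+1) := by
      have : n ≤ (n - (k+1)) + (k+1) := le_tsub_add
      calc n * n.descFactorial (k+1) ≤ ((n - (k+1)) + (k+1)) * n.descFactorial (k+1) :=
            Nat.mul_le_mul_right _ this
        _ = _ := by ring
    have h5 : (k+1) * n.descFactorial (k+1) ≤ (k+1) * n ^ (k+1) :=
      Nat.mul_le_mul_left _ (Nat.descFactorial_le_pow n (k+1))
    have h6 : (n - (k+1)) * n.descFactorial (k+1) = n.descFactorial (k+2) :=
      (Nat.descFactorial_succ n (k+1)).symm
    have h7 : (k+2).choose 2 = (k+1) + (k+1).choose 2 := by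
      rw [Nat.choose_succ_succ]
      simp [Nat.choose_one_right]
    calc n ^ (k+2) = n * n ^ (k+1) := h1
      _ ≤ n * n.descFactorial (k+1) + (k+1).choose 2 * n ^ (k+1) := by omega
      _ ≤ n.descFactorial (k+2) + (k+1) * n ^ (k+1) + (k+1).choose 2 * n ^ (k+1) := by omega
      _ = n.descFactorial (k+2) + (k+2).choose 2 * n ^ ((k+2)-1) := by
          have hp : n ^ ((k+2)-1) = n ^ (k+1) := rfl
          rw [h7, hp]; ring
      _ ≤ _ := le_refl _

lemma noninj_card_le (n l : ℕ) :
    ((univ : Finset (Fin l → Fin n)).filter fun w => ¬ Function.Injective w).card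
      ≤ l.choose 2 * n ^ (l-1) := by
  classical
  have hinj : ((univ : Finset (Fin l → Fin n)).filter fun w => Function.Injective w).card
      = n.descFactorial l := by
    rw [← Fintype.card_subtype]
    rw [Fintype.card_congr (Equiv.subtypeInjectiveEquivEmbedding (Fin l) (Fin n))]
    simp [Fintype.card_embedding_eq]
  have htot : ((univ : Finset (Fin l → Fin n)).filter fun w => Function.Injective w).card
      + ((univ : Finset (Fin l → Fin n)).filter fun w => ¬ Function.Injective w).card
      = n ^ l := by
    rw [Finset.card_filter_add_card_filter_not]
    simp [Fintype.card_fun]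
  have := pow_le_descFactorial_add n l
  omega

lemma const_ineq : ∀ l : ℕ, l + l.choose 2 + 1 ≤ 2 ^ l
  | 0 => by simp
  | (k+1) => by
    have ih := const_ineq k
    have h1 : (k+1).choose 2 = k + k.choose 2 := by
      rw [Nat.choose_succ_succ]; simp [Nat.choose_one_right]
    have h2 : k + 1 ≤ 2 ^ k := k.lt_two_pow_self
    have h3 : 2 ^ (k+1) = 2 ^ k + 2 ^ k := by ring
    omega

lemma tail_props (r l n : ℕ) (hr : 2 ≤ r) (E : Finset (Finset (Fin n)))
    (hE : ∀ e ∈ E, e.card = r) (w : Fin l → Fin n) (hwinj : Function.Injective w) :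
    (univ.image w).card = l ∧
    (∀ f ∈ (powersetCard (r-1) (univ : Finset (Fin n))).filter
        (fun f => ∀ i, insert (w i) f ∈ E),
      f.card = r - 1 ∧ (∀ v ∈ univ.image w, insert v f ∈ E) ∧ Disjoint f (univ.image w)) := by
  constructor
  · rw [Finset.card_image_of_injective _ hwinj, card_univ, Fintype.card_fin]
  intro f hf
  have h10 := (Finset.mem_filter.1 hf).1
  rw [Finset.mem_powersetCard] at h10
  refine ⟨h10.2, ?_, ?_⟩
  · intro v hv
    obtain ⟨i, _, rfl⟩ := Finset.mem_image.1 hv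
    exact (Finset.mem_filter.1 hf).2 i
  · rw [Finset.disjoint_left]
    intro a haf hav
    obtain ⟨i, _, rfl⟩ := Finset.mem_image.1 hav
    have h11 := (Finset.mem_filter.1 hf).2 i
    rw [Finset.insert_eq_self.2 haf] at h11
    have hc1 := hE _ h11
    omega

lemma step_lemma (r l n : ℕ) (hr : 2 ≤ r) (hl : 2 ≤ l) (hn : 1 ≤ n)
    (E : Finset (Finset (Fin n))) (hE : ∀ e ∈ E, e.card = r)
    (hm : (n:ℝ) ^ ((r:ℝ) - 1 / (l:ℝ) ^ (r-1)) ≤ (E.card : ℝ)) :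
    ∃ L : Finset (Fin n), L.card = l ∧ ∃ E' : Finset (Finset (Fin n)),
      (∀ f ∈ E', f.card = r - 1) ∧
      (∀ f ∈ E', ∀ v ∈ L, insert v f ∈ E) ∧
      (∀ f ∈ E', Disjoint f L) ∧
      (l : ℝ) * (n:ℝ) ^ (((r:ℝ) - 1) - 1 / (l:ℝ) ^ (r-2)) ≤ (E'.card : ℝ) := by
  have hx1 : (1:ℝ) ≤ (n:ℝ) := by exact_mod_cast hn
  have hx0 : (0:ℝ) < (n:ℝ) := lt_of_lt_of_le one_pos hx1
  have hl2 : (1:ℝ) ≤ (l:ℝ) := by exact_mod_cast le_trans one_le_two hl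
  have hlpow_pos : (0:ℝ) < (l:ℝ) ^ (r-2) := by positivity
  have hlpow_one : (1:ℝ) ≤ (l:ℝ) ^ (r-1) := one_le_pow₀ hl2
  have hlpow_one' : (1:ℝ) ≤ (l:ℝ) ^ (r-2) := one_le_pow₀ hl2
  have hr2 : (2:ℝ) ≤ (r:ℝ) := by exact_mod_cast hr
  have hfr0 : 0 ≤ (r:ℝ) - 1 / (l:ℝ) ^ (r-1) := by
    have h' : 1 / (l:ℝ) ^ (r-1) ≤ 1 := by
      rw [div_le_one (lt_of_lt_of_le one_pos hlpow_one)]; exact hlpow_one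
    linarith
  have hg0 : 0 ≤ ((r:ℝ) - 1) - 1 / (l:ℝ) ^ (r-2) := by
    have h' : 1 / (l:ℝ) ^ (r-2) ≤ 1 := by
      rw [div_le_one hlpow_pos]; exact hlpow_one'
    linarith
  have hm1 : (1:ℝ) ≤ (E.card : ℝ) := by
    refine le_trans ?_ hm
    calc (1:ℝ) = (n:ℝ) ^ (0:ℝ) := (Real.rpow_zero _).symm
      _ ≤ _ := Real.rpow_le_rpow_of_exponent_le hx1 hfr0
  have hEne : E.Nonempty := by
    rw [← Finset.card_pos]
    exact_mod_cast lt_of_lt_of_le zero_lt_one hm1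
  have hrn : r ≤ n := by
    obtain ⟨e, he⟩ := hEne
    calc r = e.card := (hE e he).symm
      _ ≤ Fintype.card (Fin n) := Finset.card_le_univ e
      _ = n := Fintype.card_fin n
  have hFcard : (powersetCard (r-1) (univ : Finset (Fin n))).card = n.choose (r-1) := by
    rw [card_powersetCard, card_univ, Fintype.card_fin]
  have hFpos : 0 < (powersetCard (r-1) (univ : Finset (Fin n))).card := by
    rw [hFcard]; exact Nat.choose_pos (le_trans (Nat.sub_le r 1) hrn)
  -- basic counting facts
  have h1 : (r:ℝ) * (E.card:ℝ) ≤ ∑ f ∈ powersetCard (r-1) (univ : Finset (Fin n)),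
      ((univ.filter fun v => insert v f ∈ E).card : ℝ) := by
    exact_mod_cast sum_deg n r E hE
  have hl1 : l - 1 + 1 = l := by omega
  have h2 : (∑ f ∈ powersetCard (r-1) (univ : Finset (Fin n)),
        ((univ.filter fun v => insert v f ∈ E).card : ℝ)) ^ l
        / ((powersetCard (r-1) (univ : Finset (Fin n))).card : ℝ) ^ (l-1)
      ≤ ∑ f ∈ powersetCard (r-1) (univ : Finset (Fin n)),
        ((univ.filter fun v => insert v f ∈ E).card : ℝ) ^ l := by
    have h' := pow_sum_div_card_le_sum_pow (s := powersetCard (r-1) (univ : Finset (Fin n)))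
      (f := fun f => ((univ.filter fun v => insert v f ∈ E).card : ℝ))
      (fun f _ => Nat.cast_nonneg _) (l-1)
    rwa [hl1] at h'
  have hsplit : ∑ w ∈ (univ : Finset (Fin l → Fin n)).filter (fun w => Function.Injective w),
        (((powersetCard (r-1) (univ : Finset (Fin n))).filter
          (fun f => ∀ i, insert (w i) f ∈ E)).card : ℝ)
      ≥ (∑ f ∈ powersetCard (r-1) (univ : Finset (Fin n)),
          ((univ.filter fun v => insert v f ∈ E).card : ℝ) ^ l)
        - (l.choose 2 : ℝ) * (n:ℝ)^(l-1)
            * ((powersetCard (r-1) (univ : Finset (Fin n))).card : ℝ) := by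
    have htot : ∑ w : Fin l → Fin n,
        (((powersetCard (r-1) (univ : Finset (Fin n))).filter
          (fun f => ∀ i, insert (w i) f ∈ E)).card : ℝ)
        = ∑ f ∈ powersetCard (r-1) (univ : Finset (Fin n)),
          ((univ.filter fun v => insert v f ∈ E).card : ℝ) ^ l := by
      exact_mod_cast congrArg (Nat.cast : ℕ → ℝ)
        (sum_tuples n l (powersetCard (r-1) (univ : Finset (Fin n))) E)
    have hsp := Finset.sum_filter_add_sum_filter_not (univ : Finset (Fin l → Fin n))
      (fun w => Function.Injective w)
      (fun w => (((powersetCard (r-1) (univ : Finset (Fin n))).filter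
          (fun f => ∀ i, insert (w i) f ∈ E)).card : ℝ))
    have hni : ∑ w ∈ (univ : Finset (Fin l → Fin n)).filter (fun w => ¬ Function.Injective w),
        (((powersetCard (r-1) (univ : Finset (Fin n))).filter
          (fun f => ∀ i, insert (w i) f ∈ E)).card : ℝ)
        ≤ (l.choose 2 : ℝ) * (n:ℝ)^(l-1)
            * ((powersetCard (r-1) (univ : Finset (Fin n))).card : ℝ) := by
      calc ∑ w ∈ (univ : Finset (Fin l → Fin n)).filter (fun w => ¬ Function.Injective w),
            (((powersetCard (r-1) (univ : Finset (Fin n))).filter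
              (fun f => ∀ i, insert (w i) f ∈ E)).card : ℝ)
          ≤ ∑ _w ∈ (univ : Finset (Fin l → Fin n)).filter (fun w => ¬ Function.Injective w),
            (((powersetCard (r-1) (univ : Finset (Fin n))).card : ℝ)) := by
            refine Finset.sum_le_sum fun w _ => ?_
            exact_mod_cast Finset.card_filter_le _ _
        _ = (((univ : Finset (Fin l → Fin n)).filter
              (fun w => ¬ Function.Injective w)).card : ℝ)
              * ((powersetCard (r-1) (univ : Finset (Fin n))).card : ℝ) := by
            rw [Finset.sum_const, nsmul_eq_mul]
        _ ≤ (l.choose 2 : ℝ) * (n:ℝ)^(l-1)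
              * ((powersetCard (r-1) (univ : Finset (Fin n))).card : ℝ) := by
            have hc : (((univ : Finset (Fin l → Fin n)).filter
                (fun w => ¬ Function.Injective w)).card : ℝ)
                ≤ (l.choose 2 : ℝ) * (n:ℝ)^(l-1) := by
              exact_mod_cast noninj_card_le n l
            exact mul_le_mul_of_nonneg_right hc (Nat.cast_nonneg _)
    linarith
  have hchoose_le : ((powersetCard (r-1) (univ : Finset (Fin n))).card : ℝ)
      ≤ (n:ℝ) ^ ((r:ℝ) - 1) := by
    have h' : ((powersetCard (r-1) (univ : Finset (Fin n))).card : ℝ) ≤ ((n ^ (r-1) : ℕ) : ℝ) := by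
      rw [hFcard]; exact_mod_cast Nat.choose_le_pow n (r-1)
    refine le_trans h' ?_
    rw [show ((n ^ (r-1) : ℕ) : ℝ) = (n:ℝ) ^ ((r-1 : ℕ) : ℝ) by
      rw [Real.rpow_natCast]; push_cast; ring]
    rw [Nat.cast_sub (le_trans one_le_two hr)]
    norm_num
  have hxr1 : (0:ℝ) < (n:ℝ) ^ ((r:ℝ) - 1) := Real.rpow_pos_of_pos hx0 _
  have hSd0 : (0:ℝ) ≤ ∑ f ∈ powersetCard (r-1) (univ : Finset (Fin n)),
      ((univ.filter fun v => insert v f ∈ E).card : ℝ) :=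
    Finset.sum_nonneg fun f _ => Nat.cast_nonneg _
  have hkey1 : ((r:ℝ) * (n:ℝ) ^ ((r:ℝ) - 1 / (l:ℝ) ^ (r-1))) ^ l
        / ((n:ℝ) ^ ((r:ℝ) - 1)) ^ (l-1)
      ≤ ∑ f ∈ powersetCard (r-1) (univ : Finset (Fin n)),
        ((univ.filter fun v => insert v f ∈ E).card : ℝ) ^ l := by
    refine le_trans ?_ h2
    have hnum : ((r:ℝ) * (n:ℝ) ^ ((r:ℝ) - 1 / (l:ℝ) ^ (r-1))) ^ l
        ≤ (∑ f ∈ powersetCard (r-1) (univ : Finset (Fin n)),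
          ((univ.filter fun v => insert v f ∈ E).card : ℝ)) ^ l := by
      refine pow_le_pow_left₀ (mul_nonneg (Nat.cast_nonneg r) (Real.rpow_nonneg hx0.le _)) ?_ l
      refine le_trans ?_ h1
      exact mul_le_mul_of_nonneg_left hm (Nat.cast_nonneg r)
    refine div_le_div₀ (pow_nonneg hSd0 l) hnum ?_ ?_
    · exact pow_pos (by exact_mod_cast hFpos) (l-1)
    · exact pow_le_pow_left₀ (Nat.cast_nonneg _) hchoose_le (l-1)
  have hlcast : ((l - 1 : ℕ) : ℝ) = (l:ℝ) - 1 := by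
    rw [Nat.cast_sub (le_trans one_le_two hl)]; norm_num
  have hlpow_succ : (l:ℝ) ^ (r-1) = (l:ℝ) ^ (r-2) * (l:ℝ) := by
    rw [← pow_succ]; congr 1; omega
  have hkey2 : ((r:ℝ) * (n:ℝ) ^ ((r:ℝ) - 1 / (l:ℝ) ^ (r-1))) ^ l
        / ((n:ℝ) ^ ((r:ℝ) - 1)) ^ (l-1)
      = (r:ℝ) ^ l * (n:ℝ) ^ ((((r:ℝ) - 1) - 1 / (l:ℝ) ^ (r-2)) + l) := by
    rw [mul_pow, ← Real.rpow_natCast ((n:ℝ) ^ ((r:ℝ) - 1 / (l:ℝ) ^ (r-1))) l,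
      ← Real.rpow_mul hx0.le,
      ← Real.rpow_natCast ((n:ℝ) ^ ((r:ℝ) - 1)) (l-1), ← Real.rpow_mul hx0.le,
      mul_div_assoc, ← Real.rpow_sub hx0]
    congr 1
    congr 1
    rw [hlcast, hlpow_succ]
    have hl0 : (l:ℝ) ≠ 0 := by positivity
    have hlp0 : (l:ℝ) ^ (r-2) ≠ 0 := ne_of_gt hlpow_pos
    generalize (l:ℝ) ^ (r-2) = y at hlp0
    field_simp
    ring
  have hnoise : (l.choose 2 : ℝ) * (n:ℝ)^(l-1)
        * ((powersetCard (r-1) (univ : Finset (Fin n))).card : ℝ)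
      ≤ (l.choose 2 : ℝ) * (n:ℝ) ^ ((((r:ℝ) - 1) - 1 / (l:ℝ) ^ (r-2)) + l) := by
    have ha : ((n:ℝ)) ^ ((l:ℕ)-1) * ((powersetCard (r-1) (univ : Finset (Fin n))).card : ℝ)
        ≤ (n:ℝ) ^ (((l:ℝ) - 1) + ((r:ℝ) - 1)) := by
      rw [Real.rpow_add hx0]
      refine mul_le_mul ?_ hchoose_le (Nat.cast_nonneg _) (Real.rpow_nonneg hx0.le _)
      rw [← Real.rpow_natCast (n:ℝ) (l-1), hlcast]
    have hb : (n:ℝ) ^ (((l:ℝ) - 1) + ((r:ℝ) - 1))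
        ≤ (n:ℝ) ^ ((((r:ℝ) - 1) - 1 / (l:ℝ) ^ (r-2)) + l) := by
      refine Real.rpow_le_rpow_of_exponent_le hx1 ?_
      have h' : 1 / (l:ℝ) ^ (r-2) ≤ 1 := by
        rw [div_le_one hlpow_pos]; exact hlpow_one'
      linarith
    calc (l.choose 2 : ℝ) * (n:ℝ)^(l-1)
          * ((powersetCard (r-1) (univ : Finset (Fin n))).card : ℝ)
        = (l.choose 2 : ℝ) * ((n:ℝ)^((l:ℕ)-1)
            * ((powersetCard (r-1) (univ : Finset (Fin n))).card : ℝ)) := by ring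
      _ ≤ (l.choose 2 : ℝ) * (n:ℝ) ^ ((((r:ℝ) - 1) - 1 / (l:ℝ) ^ (r-2)) + l) :=
          mul_le_mul_of_nonneg_left (le_trans ha hb) (Nat.cast_nonneg _)
  have hconst : (l:ℝ) + (l.choose 2 : ℝ) ≤ (r:ℝ) ^ l := by
    have h2l : l + l.choose 2 ≤ 2 ^ l := by have := const_ineq l; omega
    have hrl : (2:ℕ) ^ l ≤ r ^ l := Nat.pow_le_pow_left hr l
    exact_mod_cast le_trans h2l hrl
  have hgl0 : (0:ℝ) < (n:ℝ) ^ ((((r:ℝ) - 1) - 1 / (l:ℝ) ^ (r-2)) + l) :=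
    Real.rpow_pos_of_pos hx0 _
  have hmain : ((n ^ l : ℕ) : ℝ)
        * ((l:ℝ) * (n:ℝ) ^ (((r:ℝ) - 1) - 1 / (l:ℝ) ^ (r-2)))
      ≤ ∑ w ∈ (univ : Finset (Fin l → Fin n)).filter (fun w => Function.Injective w),
        (((powersetCard (r-1) (univ : Finset (Fin n))).filter
          (fun f => ∀ i, insert (w i) f ∈ E)).card : ℝ) := by
    have e1 : ((n ^ l : ℕ) : ℝ)
        * ((l:ℝ) * (n:ℝ) ^ (((r:ℝ) - 1) - 1 / (l:ℝ) ^ (r-2)))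
        = (l:ℝ) * (n:ℝ) ^ ((((r:ℝ) - 1) - 1 / (l:ℝ) ^ (r-2)) + l) := by
      rw [Real.rpow_add hx0, Real.rpow_natCast]
      push_cast
      ring
    rw [e1]
    have hS : (r:ℝ)^l * (n:ℝ) ^ ((((r:ℝ) - 1) - 1 / (l:ℝ) ^ (r-2)) + l)
        ≤ ∑ f ∈ powersetCard (r-1) (univ : Finset (Fin n)),
          ((univ.filter fun v => insert v f ∈ E).card : ℝ) ^ l := by
      rw [← hkey2]; exact hkey1
    have h6 : (l:ℝ) * (n:ℝ) ^ ((((r:ℝ) - 1) - 1 / (l:ℝ) ^ (r-2)) + l)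
        ≤ ((r:ℝ)^l - (l.choose 2 : ℝ)) * (n:ℝ) ^ ((((r:ℝ) - 1) - 1 / (l:ℝ) ^ (r-2)) + l) := by
      refine mul_le_mul_of_nonneg_right ?_ hgl0.le
      linarith
    have h7 : ((r:ℝ)^l - (l.choose 2 : ℝ)) * (n:ℝ) ^ ((((r:ℝ) - 1) - 1 / (l:ℝ) ^ (r-2)) + l)
        = (r:ℝ)^l * (n:ℝ) ^ ((((r:ℝ) - 1) - 1 / (l:ℝ) ^ (r-2)) + l)
          - (l.choose 2 : ℝ) * (n:ℝ) ^ ((((r:ℝ) - 1) - 1 / (l:ℝ) ^ (r-2)) + l) := by ring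
    linarith
  -- pigeonhole
  have hl0' : (0:ℝ) < (l:ℝ) := lt_of_lt_of_le one_pos hl2
  have hTpos : (0:ℝ) < (l:ℝ) * (n:ℝ) ^ (((r:ℝ) - 1) - 1 / (l:ℝ) ^ (r-2)) :=
    mul_pos hl0' (Real.rpow_pos_of_pos hx0 _)
  have hinjcard : ((((univ : Finset (Fin l → Fin n)).filter
      (fun w => Function.Injective w)).card : ℝ)) ≤ ((n ^ l : ℕ) : ℝ) := by
    have h8 : ((univ : Finset (Fin l → Fin n)).filter (fun w => Function.Injective w)).card
        ≤ n ^ l := by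
      calc _ ≤ (univ : Finset (Fin l → Fin n)).card := Finset.card_filter_le _ _
        _ = n ^ l := by rw [card_univ]; simp [Fintype.card_fun]
    exact_mod_cast h8
  have hnl1 : (1:ℝ) ≤ ((n ^ l : ℕ) : ℝ) := by
    have h' : 1 ≤ n ^ l := Nat.one_le_pow _ _ hn
    exact_mod_cast h'
  have hne : ((univ : Finset (Fin l → Fin n)).filter (fun w => Function.Injective w)).Nonempty := by
    rcases Finset.eq_empty_or_nonempty
      ((univ : Finset (Fin l → Fin n)).filter (fun w => Function.Injective w)) with h | h
    · exfalso
      rw [h, Finset.sum_empty] at hmain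
      nlinarith
    · exact h
  obtain ⟨w, hwmem, hw⟩ : ∃ w ∈ (univ : Finset (Fin l → Fin n)).filter
      (fun w => Function.Injective w),
      (l:ℝ) * (n:ℝ) ^ (((r:ℝ) - 1) - 1 / (l:ℝ) ^ (r-2))
        ≤ (((powersetCard (r-1) (univ : Finset (Fin n))).filter
          (fun f => ∀ i, insert (w i) f ∈ E)).card : ℝ) := by
    refine Finset.exists_le_of_sum_le hne ?_
    rw [Finset.sum_const, nsmul_eq_mul]
    calc _ ≤ ((n ^ l : ℕ) : ℝ)
          * ((l:ℝ) * (n:ℝ) ^ (((r:ℝ) - 1) - 1 / (l:ℝ) ^ (r-2))) :=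
          mul_le_mul_of_nonneg_right hinjcard hTpos.le
      _ ≤ _ := hmain
  have hwinj : Function.Injective w := (Finset.mem_filter.1 hwmem).2
  obtain ⟨hL, hprops⟩ := tail_props r l n hr E hE w hwinj
  exact ⟨univ.image w, hL,
    (powersetCard (r-1) (univ : Finset (Fin n))).filter (fun f => ∀ i, insert (w i) f ∈ E),
    fun f hf => (hprops f hf).1, fun f hf => (hprops f hf).2.1,
    fun f hf => (hprops f hf).2.2, hw⟩

lemma aux_induction (l : ℕ) (hl : 2 ≤ l) :
    ∀ r : ℕ, 1 ≤ r → ∀ n : ℕ, 1 ≤ n →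
    ∀ E : Finset (Finset (Fin n)), (∀ e ∈ E, e.card = r) →
    ((r = 1 ∧ (l:ℝ) ≤ (E.card : ℝ)) ∨
     (2 ≤ r ∧ (n:ℝ) ^ ((r:ℝ) - 1 / (l:ℝ) ^ (r-1)) ≤ (E.card : ℝ))) →
    ∃ A : Fin r → Finset (Fin n),
      (∀ i, (A i).card = l) ∧
      (∀ i j, i ≠ j → Disjoint (A i) (A j)) ∧
      (∀ i, ∀ a ∈ A i, ∃ e ∈ E, a ∈ e) ∧
      (∀ e : Finset (Fin n), e.card = r → (∀ i, (e ∩ A i).card = 1) → e ∈ E) := by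
  refine Nat.le_induction ?_ ?_
  · -- base case r = 1
    intro n hn E hcard hthr
    have hle : l ≤ E.card := by
      rcases hthr with ⟨_, h⟩ | ⟨h, _⟩
      · exact_mod_cast h
      · omega
    obtain ⟨s, hsub, hscard⟩ := Finset.exists_subset_card_eq hle
    have hcard1 : ∀ e ∈ s, e.card = 1 := fun e he => hcard e (hsub he)
    have hdisj : ∀ x ∈ s, ∀ y ∈ s, x ≠ y → Disjoint (id x) (id y) := by
      intro x hx y hy hxy
      obtain ⟨a, rfl⟩ := Finset.card_eq_one.1 (hcard1 x hx)
      obtain ⟨b, rfl⟩ := Finset.card_eq_one.1 (hcard1 y hy)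
      simp only [id]
      rw [Finset.disjoint_singleton]
      intro hab
      exact hxy (by rw [hab])
    have hAcard : (s.biUnion id).card = l := by
      rw [Finset.card_biUnion hdisj]
      calc ∑ e ∈ s, (id e).card = ∑ e ∈ s, 1 := Finset.sum_congr rfl fun e he => hcard1 e he
        _ = l := by rw [Finset.sum_const, smul_eq_mul, mul_one, hscard]
    refine ⟨fun _ => s.biUnion id, fun _ => hAcard, ?_, ?_, ?_⟩
    · intro i j hij
      exact absurd (Subsingleton.elim i j) hij
    · intro i a ha
      obtain ⟨e, he, hae⟩ := Finset.mem_biUnion.1 ha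
      exact ⟨e, hsub he, hae⟩
    · intro e hecard htr
      have h0 := htr 0
      have hsubA : e ⊆ s.biUnion id := by
        rw [← Finset.inter_eq_left]
        apply Finset.eq_of_subset_of_card_le (Finset.inter_subset_left)
        rw [hecard, h0]
      obtain ⟨a, rfl⟩ := Finset.card_eq_one.1 hecard
      have ha : a ∈ s.biUnion id := hsubA (Finset.mem_singleton_self a)
      obtain ⟨e', he', hae'⟩ := Finset.mem_biUnion.1 ha
      obtain ⟨b, rfl⟩ := Finset.card_eq_one.1 (hcard1 e' he')
      simp only [id_eq, Finset.mem_singleton] at hae'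
      subst hae'
      exact hsub he'
  · -- inductive step : r → r+1, r ≥ 1
    intro r hr IH n hn E hcard hthr
    have hthr' : (n:ℝ) ^ (((r+1:ℕ):ℝ) - 1 / (l:ℝ) ^ ((r+1)-1)) ≤ (E.card : ℝ) := by
      rcases hthr with ⟨h1, _⟩ | ⟨_, h2⟩
      · omega
      · exact_mod_cast h2
    obtain ⟨L, hLcard, E', hE'card, hE'ins, hE'disj, hE'bound⟩ :=
      step_lemma (r+1) l n (by omega) hl hn E hcard hthr'
    have hE'card' : ∀ f ∈ E', f.card = r := by
      intro f hf; have := hE'card f hf; omega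
    have hcast : (((r+1:ℕ)):ℝ) - 1 = (r:ℝ) := by push_cast; ring
    have hidx : (r+1) - 2 = r - 1 := by omega
    rw [hidx, hcast] at hE'bound
    have hl2 : (1:ℝ) ≤ (l:ℝ) := by exact_mod_cast le_trans one_le_two hl
    have hx0 : (0:ℝ) < (n:ℝ) := by exact_mod_cast hn
    -- threshold for E'
    have hthrE' : ((r = 1 ∧ (l:ℝ) ≤ (E'.card : ℝ)) ∨
        (2 ≤ r ∧ (n:ℝ) ^ ((r:ℝ) - 1 / (l:ℝ) ^ (r-1)) ≤ (E'.card : ℝ))) := by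
      rcases Nat.lt_or_ge r 2 with h | h
      · left
        have hr1 : r = 1 := by omega
        subst hr1
        refine ⟨rfl, ?_⟩
        have : ((1:ℕ):ℝ) - 1 / (l:ℝ) ^ (1-1) = 0 := by norm_num
        rw [this, Real.rpow_zero, mul_one] at hE'bound
        exact hE'bound
      · right
        refine ⟨h, le_trans ?_ hE'bound⟩
        exact le_mul_of_one_le_left (Real.rpow_nonneg hx0.le _) hl2
    obtain ⟨A', hA'card, hA'disj, hA'supp, hA'trans⟩ := IH n hn E' hE'card' hthrE'
    have hA'L : ∀ i, Disjoint (A' i) L := by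
      intro i
      rw [Finset.disjoint_left]
      intro a hai haL
      obtain ⟨f, hf, haf⟩ := hA'supp i a hai
      exact (Finset.disjoint_left.1 (hE'disj f hf)) haf haL
    have hLne : L.Nonempty := by
      rw [← Finset.card_pos, hLcard]; omega
    have hE'ne : E'.Nonempty := by
      rw [← Finset.card_pos]
      have h0 : (0:ℝ) < (l:ℝ) * (n:ℝ) ^ ((r:ℝ) - 1 / (l:ℝ) ^ (r-1)) :=
        mul_pos (lt_of_lt_of_le one_pos hl2) (Real.rpow_pos_of_pos hx0 _)
      exact_mod_cast lt_of_lt_of_le h0 hE'bound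
    refine ⟨Fin.snoc A' L, ?_, ?_, ?_, ?_⟩
    · intro i
      refine Fin.lastCases ?_ ?_ i
      · rw [Fin.snoc_last]; exact hLcard
      · intro j; rw [Fin.snoc_castSucc]; exact hA'card j
    · intro i j
      refine Fin.lastCases ?_ ?_ i <;> refine Fin.lastCases ?_ ?_ j
      · intro hij; exact absurd rfl hij
      · intro j' _
        rw [Fin.snoc_last, Fin.snoc_castSucc]
        exact (hA'L j').symm
      · intro i' _
        rw [Fin.snoc_last, Fin.snoc_castSucc]
        exact hA'L i'
      · intro j' i' hij
        rw [Fin.snoc_castSucc, Fin.snoc_castSucc]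
        refine hA'disj i' j' ?_
        intro hcontra
        exact hij (by rw [hcontra])
    · intro i
      refine Fin.lastCases ?_ ?_ i
      · rw [Fin.snoc_last]
        intro a ha
        obtain ⟨f, hf⟩ := hE'ne
        exact ⟨insert a f, hE'ins f hf a ha, Finset.mem_insert_self a f⟩
      · intro j
        rw [Fin.snoc_castSucc]
        intro a ha
        obtain ⟨f, hf, haf⟩ := hA'supp j a ha
        obtain ⟨v, hv⟩ := hLne
        exact ⟨insert v f, hE'ins f hf v hv, Finset.mem_insert_of_mem haf⟩
    · intro e hecard htr
      have hL1 : (e ∩ L).card = 1 := by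
        have h := htr (Fin.last r)
        rwa [Fin.snoc_last] at h
      obtain ⟨v, hv⟩ := Finset.card_eq_one.1 hL1
      have hvmem : v ∈ e ∩ L := hv ▸ Finset.mem_singleton_self v
      have hve : v ∈ e := (Finset.mem_inter.1 hvmem).1
      have hvL : v ∈ L := (Finset.mem_inter.1 hvmem).2
      have hfcard : (e.erase v).card = r := by
        rw [Finset.card_erase_of_mem hve, hecard]
        omega
      have hfA' : ∀ i : Fin r, ((e.erase v) ∩ A' i).card = 1 := by
        intro i
        have h := htr (Fin.castSucc i)
        rw [Fin.snoc_castSucc] at h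
        have hvnot : v ∉ A' i := fun hmem => (Finset.disjoint_left.1 (hA'L i)) hmem hvL
        have heq : (e.erase v) ∩ A' i = e ∩ A' i := by
          ext b
          simp only [Finset.mem_inter, Finset.mem_erase]
          constructor
          · rintro ⟨⟨_, hb⟩, hbA⟩; exact ⟨hb, hbA⟩
          · rintro ⟨hb, hbA⟩
            refine ⟨⟨?_, hb⟩, hbA⟩
            intro hbv
            exact hvnot (hbv ▸ hbA)
        rw [heq]; exact h
      have hfE' : e.erase v ∈ E' := hA'trans (e.erase v) hfcard hfA'
      have hins := hE'ins (e.erase v) hfE' v hvL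
      rwa [Finset.insert_erase hve] at hins

/-- Erdős' theorem: for fixed `r, l ≥ 2` there is `n₀` such that for all `n ≥ n₀`,
every `r`-uniform hypergraph on `n` vertices with at least `n ^ (r - 1/l^(r-1))`
edges contains a complete `r`-partite `r`-uniform subhypergraph `K^{(r)}(l,…,l)`. -/
theorem erdos_hypergraph_Kpartite (r l : ℕ) (hr : 2 ≤ r) (hl : 2 ≤ l) :
    ∃ n₀ : ℕ, ∀ n : ℕ, n₀ ≤ n →
      ∀ E : Finset (Finset (Fin n)), (∀ e ∈ E, e.card = r) →
        (n : ℝ) ^ ((r : ℝ) - 1 / (l : ℝ) ^ (r - 1)) ≤ (E.card : ℝ) →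
        ∃ A : Fin r → Finset (Fin n),
          (∀ i, (A i).card = l) ∧
          (∀ i j, i ≠ j → Disjoint (A i) (A j)) ∧
          ∀ e : Finset (Fin n), e.card = r → (∀ i, (e ∩ A i).card = 1) → e ∈ E := by
  refine ⟨1, fun n hn E hcard hthr => ?_⟩
  obtain ⟨A, h1, h2, _, h4⟩ := aux_induction l hl r (by omega) n hn E hcard (Or.inr ⟨hr, hthr⟩)
  exact ⟨A, h1, h2, h4⟩
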